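/- Let X₁, X₂, … be i.i.d. real random variables on a probability space, and suppose T is a real random variable measurable with respect to the exchangeable (finite-permutation-invariant) events of the sequence, i.e., T is almost surely invariant under every finite permutation of the coordinates. Then T is almost surely constant. -/

import Mathlib

open MeasureTheory

open MeasureTheory ProbabilityTheory Set

section aux
variable {Ω : Type*} [MeasurableSpace Ω] {P : Measure Ω}

lemma hs_iIndepFun_comp_inj {ι ι' : Type*} {β : Type*} [mβ : MeasurableSpace β]
    {f : ι → Ω → β} (hf : iIndepFun f P) {g : ι' → ι}
    (hg : Function.Injective g) :
    iIndepFun (fun i => f (g i)) P := by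
  classical
  rw [iIndepFun_iff_measure_inter_preimage_eq_mul] at hf ⊢
  intro S sets hsets
  have h := hf (S.image g)
    (sets := fun j => Function.extend g sets (fun _ => Set.univ) j) ?_
  · rw [Finset.set_biInter_finset_image] at h
    rw [Finset.prod_image (fun a _ b _ hab => hg hab)] at h
    simp only [hg.extend_apply] at h
    exact h
  · intro j hj
    obtain ⟨i, hi, rfl⟩ := Finset.mem_image.mp hj
    simpa only [hg.extend_apply] using hsets i hi

lemma hs_map_tuple [IsProbabilityMeasure P] {X : ℕ → Ω → ℝ}
    (hmeas : ∀ i, Measurable (X i)) {μ : Measure ℝ}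
    (hindep : iIndepFun X P)
    (hident : ∀ i, P.map (X i) = μ)
    {ι' : Type*} [Fintype ι'] {g : ι' → ℕ} (hg : Function.Injective g) :
    P.map (fun ω (i : ι') => X (g i) ω) = Measure.pi (fun _ => μ) := by
  have hμ : IsProbabilityMeasure μ := by
    rw [← hident 0]; exact Measure.isProbabilityMeasure_map (hmeas 0).aemeasurable
  refine (Measure.pi_eq fun s hs => ?_).symm
  have hmt : Measurable (fun ω (i : ι') => X (g i) ω) :=
    measurable_pi_lambda _ fun i => hmeas (g i)
  rw [Measure.map_apply hmt (MeasurableSet.univ_pi hs)]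
  have hpre : (fun ω (i : ι') => X (g i) ω) ⁻¹' Set.pi Set.univ s
      = ⋂ i : ι', X (g i) ⁻¹' s i := by
    ext ω; simp [Set.mem_pi]
  rw [hpre]
  have h := (hs_iIndepFun_comp_inj hindep hg).meas_iInter
    (s := fun i => X (g i) ⁻¹' s i) (fun i => ⟨s i, hs i, rfl⟩)
  rw [h]
  refine Finset.prod_congr rfl fun i _ => ?_
  rw [← hident (g i), Measure.map_apply (hmeas (g i)) (hs i)]

lemma hs_map_seq_eq [IsProbabilityMeasure P] {X : ℕ → Ω → ℝ}
    (hmeas : ∀ i, Measurable (X i)) {μ : Measure ℝ}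
    (hindep : iIndepFun X P)
    (hident : ∀ i, P.map (X i) = μ)
    {g : ℕ → ℕ} (hg : Function.Injective g) :
    P.map (fun ω (i : ℕ) => X (g i) ω) = P.map (fun ω (i : ℕ) => X i ω) := by
  have hm1 : Measurable (fun ω (i : ℕ) => X (g i) ω) :=
    measurable_pi_lambda _ fun i => hmeas (g i)
  have hm2 : Measurable (fun ω (i : ℕ) => X i ω) :=
    measurable_pi_lambda _ fun i => hmeas i
  have : IsProbabilityMeasure (P.map (fun ω (i : ℕ) => X (g i) ω)) :=
    Measure.isProbabilityMeasure_map hm1.aemeasurable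
  have : IsProbabilityMeasure (P.map (fun ω (i : ℕ) => X i ω)) :=
    Measure.isProbabilityMeasure_map hm2.aemeasurable
  refine ext_of_generate_finite _ generateFrom_measurableCylinders.symm
    isPiSystem_measurableCylinders (fun t ht => ?_) (by simp)
  obtain ⟨s, S, hS, rfl⟩ := (mem_measurableCylinders t).mp ht
  rw [Measure.map_apply hm1 (hS.cylinder), Measure.map_apply hm2 (hS.cylinder)]
  have h1 : (fun ω (i : ℕ) => X (g i) ω) ⁻¹' cylinder s S
      = (fun ω (i : s) => X (g i) ω) ⁻¹' S := rfl
  have h2 : (fun ω (i : ℕ) => X i ω) ⁻¹' cylinder s S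
      = (fun ω (i : s) => X (i : ℕ) ω) ⁻¹' S := rfl
  rw [h1, h2]
  have hg1 : Function.Injective (fun i : s => g (i : ℕ)) :=
    fun a b hab => Subtype.val_injective (hg hab)
  have hg2 : Function.Injective (fun i : s => (i : ℕ)) := Subtype.val_injective
  rw [← Measure.map_apply (measurable_pi_lambda _ fun i : s => hmeas (g (i:ℕ))) hS,
    ← Measure.map_apply (measurable_pi_lambda _ fun i : s => hmeas (i:ℕ)) hS,
    hs_map_tuple hmeas hindep hident hg1,
    hs_map_tuple hmeas hindep hident hg2]

end aux
open scoped symmDiff ENNReal NNReal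

def hsSwapFun (n : ℕ) : ℕ → ℕ := fun i => if i < n then i + n else if i < 2*n then i - n else i

lemma hsSwapFun_involutive (n : ℕ) : Function.Involutive (hsSwapFun n) := by
  intro i
  unfold hsSwapFun
  split_ifs <;> omega

noncomputable def hsSwap (n : ℕ) : Equiv.Perm ℕ := (hsSwapFun_involutive n).toPerm

lemma hsSwap_apply_lt {n i : ℕ} (h : i < n) : hsSwap n i = i + n := by
  simp [hsSwap, Function.Involutive.toPerm, hsSwapFun, h]

lemma hsSwap_apply_ge {n i : ℕ} (h : 2*n ≤ i) : hsSwap n i = i := by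
  simp only [hsSwap, Function.Involutive.toPerm, Equiv.coe_fn_mk, hsSwapFun]
  rw [if_neg (by omega), if_neg (by omega)]

lemma hsSwap_support (n : ℕ) : {i | hsSwap n i ≠ i}.Finite := by
  apply Set.Finite.subset (Finset.range (2*n)).finite_toSet
  intro i hi
  simp only [Set.mem_setOf_eq] at hi
  simp only [Finset.coe_range, Set.mem_Iio]
  by_contra h
  exact hi (hsSwap_apply_ge (by omega))

section zo
variable {Ω : Type*} [MeasurableSpace Ω] {P : Measure Ω} [IsProbabilityMeasure P]

lemma hs_symmDiff_le (U V : Set Ω) : P U ≤ P V + P (U ∆ V) := by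
  refine le_trans (measure_mono ?_) (measure_union_le _ _)
  intro x hx
  by_cases h : x ∈ V
  · exact Or.inl h
  · exact Or.inr (Or.inl ⟨hx, h⟩)

lemma hs_symmDiff_inter (U₁ U₂ V₁ V₂ : Set Ω) :
    (U₁ ∩ U₂) ∆ (V₁ ∩ V₂) ⊆ (U₁ ∆ V₁) ∪ (U₂ ∆ V₂) := by
  intro x hx
  simp only [Set.mem_symmDiff, Set.mem_inter_iff, Set.mem_union] at hx ⊢
  tauto
end zo

section main
variable {Ω : Type*} [MeasurableSpace Ω] {P : Measure Ω} [IsProbabilityMeasure P]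

lemma hs_zero_one {X : ℕ → Ω → ℝ} (hmeas : ∀ i, Measurable (X i)) {μ : Measure ℝ}
    (hindep : iIndepFun X P)
    (hident : ∀ i, P.map (X i) = μ)
    {φ : (ℕ → ℝ) → ℝ} (hφ : Measurable φ)
    (hperm : ∀ σ : Equiv.Perm ℕ, {i | σ i ≠ i}.Finite →
      (fun ω => φ (fun i => X (σ i) ω)) =ᵐ[P] fun ω => φ (fun i => X i ω))
    {B : Set ℝ} (hB : MeasurableSet B) :
    P {ω | φ (fun i => X i ω) ∈ B} = 0 ∨ P {ω | φ (fun i => X i ω) ∈ B} = 1 := by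
  classical
  set Y : Ω → ℕ → ℝ := fun ω i => X i ω with hYdef
  have hY : Measurable Y := measurable_pi_lambda _ hmeas
  set ν : Measure (ℕ → ℝ) := P.map Y with hνdef
  haveI : IsProbabilityMeasure ν := Measure.isProbabilityMeasure_map hY.aemeasurable
  set E : Set (ℕ → ℝ) := φ ⁻¹' B with hEdef
  have hEm : MeasurableSet E := hφ hB
  have hPA : P {ω | φ (fun i => X i ω) ∈ B} = ν E := by
    rw [hνdef, Measure.map_apply hY hEm]; rfl
  rw [hPA]
  set a := ν E with hadef
  have ha1 : a ≤ 1 := prob_le_one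
  -- key: a * a = a
  have key : a * a = a := by
    have hmain : ∀ ε : ℝ, 0 < ε →
        a ≤ a * a + ENNReal.ofReal ε * 5 ∧ a * a ≤ a + ENNReal.ofReal ε * 5 := by
      intro ε hε
      -- approximation by a cylinder
      have halg : IsSetAlgebra (measurableCylinders (fun _ : ℕ => ℝ)) :=
        ⟨empty_mem_measurableCylinders _, fun _ h => compl_mem_measurableCylinders h,
          fun _ _ hs ht => union_mem_measurableCylinders hs ht⟩
      have hdense :=
        Measure.MeasureDense.of_generateFrom_isSetAlgebra_finite (μ := ν)
          halg generateFrom_measurableCylinders.symm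
      obtain ⟨C, hCmem, hCε⟩ := hdense.approx E hEm (measure_ne_top _ _) ε hε
      obtain ⟨s, S, hS, rfl⟩ := (mem_measurableCylinders C).mp hCmem
      set n : ℕ := s.sup id + 1 with hndef
      have hsn : ∀ i ∈ s, i < n := fun i hi =>
        Nat.lt_succ_of_le (Finset.le_sup (f := id) hi)
      set σ : Equiv.Perm ℕ := hsSwap n with hσdef
      set Yσ : Ω → ℕ → ℝ := fun ω i => X (σ i) ω with hYσdef
      have hYσ : Measurable Yσ := measurable_pi_lambda _ fun i => hmeas (σ i)
      have hlaw : P.map Yσ = ν := hs_map_seq_eq hmeas hindep hident σ.injective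
      -- a.e. invariance
      have haeE : ∀ᵐ ω ∂P, (ω ∈ Yσ ⁻¹' E ↔ ω ∈ Y ⁻¹' E) := by
        filter_upwards [hperm σ (hsSwap_support n)] with ω hω
        simp only [Set.mem_preimage, hEdef, hYσdef, hYdef]
        rw [hω]
      have haeEq : (Yσ ⁻¹' E : Set Ω) =ᵐ[P] (Y ⁻¹' E : Set Ω) :=
        Filter.eventuallyEq_set.mpr haeE
      -- the cylinder sets
      set C : Set (ℕ → ℝ) := cylinder s S with hCdef
      have hCm : MeasurableSet C := hS.cylinder
      set B₁ : Set Ω := Y ⁻¹' C with hB1def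
      set B₂ : Set Ω := Yσ ⁻¹' C with hB2def
      -- δ bounds
      set δ : ℝ≥0∞ := ν (E ∆ C) with hδdef
      have hδε : δ < ENNReal.ofReal ε := hCε
      have hδ1 : δ ≤ 1 := prob_le_one
      have hEC : MeasurableSet (E ∆ C) := hEm.symmDiff hCm
      have e1 : P ((Y ⁻¹' E) ∆ B₁) = δ := by
        rw [hB1def, ← Set.preimage_symmDiff, ← Measure.map_apply hY hEC]
      have e2 : P ((Yσ ⁻¹' E) ∆ B₂) = δ := by
        rw [hB2def, ← Set.preimage_symmDiff, ← Measure.map_apply hYσ hEC, hlaw]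
      have e3 : P B₂ = ν C := by
        rw [hB2def, ← Measure.map_apply hYσ hCm, hlaw]
      have e4 : P B₁ = ν C := by
        rw [hB1def, ← Measure.map_apply hY hCm]
      have e5 : P (Y ⁻¹' E) = a := by rw [hadef, hνdef, Measure.map_apply hY hEm]
      -- a = P (Y⁻¹E ∩ Yσ⁻¹E)
      have hinterE : P (Y ⁻¹' E ∩ Yσ ⁻¹' E) = a := by
        rw [← e5]
        refine measure_congr (Filter.eventuallyEq_set.mpr ?_)
        filter_upwards [haeE] with ω hω
        simp only [Set.mem_inter_iff]
        tauto
      -- independence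
      have hdisj : Disjoint s (s.image fun i => σ i) := by
        rw [Finset.disjoint_left]
        intro i hi hmem
        obtain ⟨j, hj, hji⟩ := Finset.mem_image.mp hmem
        rw [hσdef, hsSwap_apply_lt (hsn j hj)] at hji
        have := hsn i hi
        omega
      set t : Finset ℕ := s.image fun i => σ i with htdef
      have hIndep := hindep.indepFun_finset s t hdisj hmeas
      set g2 : (∀ _ : t, ℝ) → (∀ _ : s, ℝ) :=
        fun v i => v ⟨σ i, Finset.mem_image_of_mem _ i.2⟩ with hg2def
      have hg2 : Measurable g2 :=
        measurable_pi_lambda _ fun i => measurable_pi_apply _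
      have hB1' : B₁ = (fun ω (i : s) => X (i : ℕ) ω) ⁻¹' S := rfl
      have hB2' : B₂ = (fun ω (i : t) => X (i : ℕ) ω) ⁻¹' (g2 ⁻¹' S) := rfl
      have hprod : P (B₁ ∩ B₂) = P B₁ * P B₂ := by
        rw [hB1', hB2']
        exact hIndep.measure_inter_preimage_eq_mul _ _ hS (hg2 hS)
      -- estimates
      have est1 : a ≤ ν C * ν C + 2 * δ := by
        calc a = P (Y ⁻¹' E ∩ Yσ ⁻¹' E) := hinterE.symm
        _ ≤ P (B₁ ∩ B₂) + P ((Y ⁻¹' E ∩ Yσ ⁻¹' E) ∆ (B₁ ∩ B₂)) := hs_symmDiff_le _ _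
        _ ≤ P (B₁ ∩ B₂) + P (((Y ⁻¹' E) ∆ B₁) ∪ ((Yσ ⁻¹' E) ∆ B₂)) := by
              exact add_le_add_right (measure_mono (hs_symmDiff_inter _ _ _ _)) _
        _ ≤ P (B₁ ∩ B₂) + (P ((Y ⁻¹' E) ∆ B₁) + P ((Yσ ⁻¹' E) ∆ B₂)) := by
              gcongr; exact measure_union_le _ _
        _ = ν C * ν C + 2 * δ := by rw [hprod, e3, e4, e1, e2]; ring
      have est2 : ν C * ν C ≤ a + 2 * δ := by
        calc ν C * ν C = P (B₁ ∩ B₂) := by rw [hprod, e3, e4]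
        _ ≤ P (Y ⁻¹' E ∩ Yσ ⁻¹' E) + P ((B₁ ∩ B₂) ∆ (Y ⁻¹' E ∩ Yσ ⁻¹' E)) :=
              hs_symmDiff_le _ _
        _ ≤ P (Y ⁻¹' E ∩ Yσ ⁻¹' E) + (P (B₁ ∆ (Y ⁻¹' E)) + P (B₂ ∆ (Yσ ⁻¹' E))) := by
              exact add_le_add_right (le_trans (measure_mono (hs_symmDiff_inter _ _ _ _))
                (measure_union_le _ _)) _
        _ = a + 2 * δ := by
              rw [hinterE, symmDiff_comm B₁, symmDiff_comm B₂, e1, e2]; ring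
      have hνCa : ν C ≤ a + δ := by
        have := hs_symmDiff_le (P := ν) C E
        rw [symmDiff_comm] at this
        exact this
      have haνC : a ≤ ν C + δ := hs_symmDiff_le (P := ν) E C
      have hνC1 : ν C ≤ 1 := prob_le_one
      constructor
      · calc a ≤ ν C * ν C + 2 * δ := est1
          _ ≤ (a + δ) * (a + δ) + 2 * δ := by gcongr
          _ = a * a + (a * δ + δ * a + δ * δ) + 2 * δ := by ring
          _ ≤ a * a + (1 * δ + δ * 1 + δ * 1) + 2 * δ := by gcongr
          _ = a * a + 5 * δ := by ring
          _ ≤ a * a + 5 * ENNReal.ofReal ε := by gcongr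
          _ = a * a + ENNReal.ofReal ε * 5 := by ring
      · calc a * a ≤ (ν C + δ) * (ν C + δ) := by gcongr
          _ = ν C * ν C + (ν C * δ + δ * ν C + δ * δ) := by ring
          _ ≤ (a + 2 * δ) + (1 * δ + δ * 1 + δ * 1) := by gcongr
          _ = a + 5 * δ := by ring
          _ ≤ a + 5 * ENNReal.ofReal ε := by gcongr
          _ = a + ENNReal.ofReal ε * 5 := by ring
    -- pass to the limit
    have h5 : ∀ ε : ℝ≥0, 0 < ε → ENNReal.ofReal ((ε : ℝ) / 5) * 5 = (ε : ℝ≥0∞) := by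
      intro ε hε
      rw [show (5 : ℝ≥0∞) = ENNReal.ofReal (5 : ℝ) by norm_num,
        ← ENNReal.ofReal_mul (by positivity), div_mul_cancel₀ _ (by norm_num : (5:ℝ) ≠ 0),
        ENNReal.ofReal_coe_nnreal]
    have h1 : a ≤ a * a := by
      refine ENNReal.le_of_forall_pos_le_add fun ε hε hlt => ?_
      calc a ≤ a * a + ENNReal.ofReal ((ε : ℝ) / 5) * 5 :=
            (hmain ((ε : ℝ) / 5) (by positivity)).1
        _ = a * a + ε := by rw [h5 ε hε]
    have h2 : a * a ≤ a := by
      refine ENNReal.le_of_forall_pos_le_add fun ε hε hlt => ?_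
      calc a * a ≤ a + ENNReal.ofReal ((ε : ℝ) / 5) * 5 :=
            (hmain ((ε : ℝ) / 5) (by positivity)).2
        _ = a + ε := by rw [h5 ε hε]
    exact le_antisymm h2 h1
  -- conclude from a * a = a
  rcases eq_or_ne a 0 with h0 | h0
  · exact Or.inl h0
  · refine Or.inr ?_
    have hne : a ≠ ⊤ := (lt_of_le_of_lt ha1 ENNReal.one_lt_top).ne
    have : a * a = a * 1 := by rw [mul_one, key]
    exact (ENNReal.mul_right_inj h0 hne).mp this

end main



/-- Hewitt–Savage: a random variable that is a (measurable) function of an i.i.d. sequence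
and is a.s. invariant under every finite permutation of the coordinates is a.s. constant. -/
theorem stmt_15 {Ω : Type*} [MeasurableSpace Ω] (P : Measure Ω) [IsProbabilityMeasure P]
    (X : ℕ → Ω → ℝ) (hmeas : ∀ i, Measurable (X i)) (μ : Measure ℝ)
    (hindep : ProbabilityTheory.iIndepFun X P)
    (hident : ∀ i, P.map (X i) = μ)
    (φ : (ℕ → ℝ) → ℝ) (hφ : Measurable φ)
    (hperm : ∀ σ : Equiv.Perm ℕ, {i | σ i ≠ i}.Finite →
      (fun ω => φ (fun i => X (σ i) ω)) =ᵐ[P] fun ω => φ (fun i => X i ω)) :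
    ∃ c : ℝ, (fun ω => φ (fun i => X i ω)) =ᵐ[P] fun _ => c := by
  classical
  set T : Ω → ℝ := fun ω => φ (fun i => X i ω) with hTdef
  have hT : Measurable T := hφ.comp (measurable_pi_lambda _ hmeas)
  have hz : ∀ t : ℝ, P (T ⁻¹' Iic t) = 0 ∨ P (T ⁻¹' Iic t) = 1 := fun t =>
    hs_zero_one hmeas hindep hident hφ hperm measurableSet_Iic
  have hmono : ∀ {t t' : ℝ}, t ≤ t' → T ⁻¹' Iic t ⊆ T ⁻¹' Iic t' :=
    fun h => preimage_mono (Iic_subset_Iic.mpr h)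
  set Sf : Set ℝ := {t | P (T ⁻¹' Iic t) = 1} with hSdef
  -- Sf is nonempty
  have hne : Sf.Nonempty := by
    by_contra h
    rw [Set.not_nonempty_iff_eq_empty] at h
    have hall : ∀ n : ℕ, P (T ⁻¹' Iic (n : ℝ)) = 0 := by
      intro n
      rcases hz n with h0 | h1
      · exact h0
      · exact absurd (Set.eq_empty_iff_forall_notMem.mp h (n : ℝ)) (fun hc => hc h1)
    have huniv : (⋃ n : ℕ, T ⁻¹' Iic (n : ℝ)) = Set.univ := by
      ext ω
      simp only [Set.mem_iUnion, Set.mem_preimage, Set.mem_Iic, Set.mem_univ, iff_true]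
      exact exists_nat_ge (T ω)
    have := measure_iUnion_null hall
    rw [huniv, measure_univ] at this
    exact one_ne_zero this
  -- Sf is bounded below
  have hbdd : BddBelow Sf := by
    have : ∃ m : ℕ, P (T ⁻¹' Iic (-(m : ℝ))) = 0 := by
      by_contra h
      push_neg at h
      have hall : ∀ m : ℕ, P ((T ⁻¹' Iic (-(m : ℝ)))ᶜ) = 0 := by
        intro m
        rcases hz (-(m : ℝ)) with h0 | h1
        · exact absurd h0 (h m)
        · exact (prob_compl_eq_zero_iff (hT measurableSet_Iic)).mpr h1
      have hempty : (⋂ m : ℕ, T ⁻¹' Iic (-(m : ℝ))) = ∅ := by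
        ext ω
        simp only [Set.mem_iInter, Set.mem_preimage, Set.mem_Iic, Set.mem_empty_iff_false,
          iff_false, not_forall, not_le]
        obtain ⟨m, hm⟩ := exists_nat_gt (-(T ω))
        exact ⟨m, by linarith⟩
      have hcompl : P ((⋂ m : ℕ, T ⁻¹' Iic (-(m : ℝ)))ᶜ) = 0 := by
        rw [Set.compl_iInter]
        exact measure_iUnion_null hall
      rw [prob_compl_eq_zero_iff (MeasurableSet.iInter fun m => hT measurableSet_Iic),
        hempty] at hcompl
      simp at hcompl
    obtain ⟨m, hm⟩ := this
    refine ⟨-(m : ℝ), fun t ht => ?_⟩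
    by_contra hlt
    push_neg at hlt
    have : P (T ⁻¹' Iic t) = 0 :=
      le_antisymm (le_trans (measure_mono (hmono hlt.le)) hm.le) zero_le
    rw [hSdef] at ht
    simp only [Set.mem_setOf_eq] at ht
    rw [ht] at this
    exact one_ne_zero this
  set c : ℝ := sInf Sf with hcdef
  refine ⟨c, ?_⟩
  -- a.e. T ≤ c
  have h_le : ∀ᵐ ω ∂P, T ω ≤ c := by
    have hk : ∀ k : ℕ, ∀ᵐ ω ∂P, T ω ≤ c + 1 / (k + 1) := by
      intro k
      have hpos : (0:ℝ) < 1 / (k + 1) := by positivity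
      obtain ⟨t, htS, htlt⟩ := (csInf_lt_iff hbdd hne).mp
        (show sInf Sf < c + 1 / (k + 1) by rw [← hcdef]; linarith)
      have h1 : P (T ⁻¹' Iic (c + 1 / (k + 1))) = 1 :=
        le_antisymm prob_le_one (by
          rw [hSdef] at htS; simp only [Set.mem_setOf_eq] at htS
          calc (1:ℝ≥0∞) = P (T ⁻¹' Iic t) := htS.symm
            _ ≤ P (T ⁻¹' Iic (c + 1 / (k + 1))) := measure_mono (hmono htlt.le))
      have := (prob_compl_eq_zero_iff (hT measurableSet_Iic)).mpr h1
      rw [← compl_compl (T ⁻¹' Iic (c + 1 / (k+1)))] at h1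
      filter_upwards [measure_eq_zero_iff_ae_notMem.mp this] with ω hω
      simpa using not_not.mp (by simpa using hω)
    have := (ae_all_iff).mpr hk
    filter_upwards [this] with ω hω
    by_contra hlt
    push_neg at hlt
    obtain ⟨k, hk'⟩ := exists_nat_one_div_lt (show (0:ℝ) < T ω - c by linarith)
    have := hω k
    rw [show ((k:ℝ)+1) = ((k+1 : ℕ):ℝ) by push_cast; ring] at hk'
    push_cast at hk' this
    linarith
  -- a.e. ¬ T < c
  have h_ge : ∀ᵐ ω ∂P, ¬ (T ω < c) := by
    have hnull : P {ω | T ω < c} = 0 := by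
      have hun : {ω | T ω < c} = ⋃ k : ℕ, T ⁻¹' Iic (c - 1 / (k + 1)) := by
        ext ω
        simp only [Set.mem_setOf_eq, Set.mem_iUnion, Set.mem_preimage, Set.mem_Iic]
        constructor
        · intro h
          obtain ⟨k, hk⟩ := exists_nat_one_div_lt (show (0:ℝ) < c - T ω by linarith)
          exact ⟨k, by push_cast at hk ⊢; linarith⟩
        · rintro ⟨k, hk⟩
          have : (0:ℝ) < 1 / ((k:ℝ) + 1) := by positivity
          linarith
      rw [hun]
      refine measure_iUnion_null fun k => ?_
      have hlt : c - 1 / ((k:ℝ) + 1) < sInf Sf := by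
        have : (0:ℝ) < 1 / ((k:ℝ) + 1) := by positivity
        rw [← hcdef]; linarith
      have hnotS : c - 1 / ((k:ℝ) + 1) ∉ Sf := notMem_of_lt_csInf hlt hbdd
      rcases hz (c - 1 / ((k:ℝ) + 1)) with h0 | h1
      · exact h0
      · exact absurd h1 hnotS
    exact measure_eq_zero_iff_ae_notMem.mp hnull
  filter_upwards [h_le, h_ge] with ω h1 h2
  exact le_antisymm h1 (not_lt.mp h2)
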